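/- Let l and m be natural numbers with m ≤ l and l−m even. Then for every real x with x² ≠ 1, 𝒫_{l−m}(x,l) = N_l^m · 𝒫_l^m(x), where N_l^m = (−1)^m · binom(l, (l−m)/2) · (l−m)!!·(l−m)!/(l+m−1)!! (with the convention (−1)!! = 1) and 𝒫_l^m(x) = (−1)^m · (d^m/dx^m) P_l(x) is the polynomial part of the associated Legendre function. -/

import Mathlib

/-- Complementary Legendre polynomial
`𝒫_ν(x,l) = (1-x²)^(ν-l) · (dᵛ/dtᵛ)(1-t²)^l |_{t=x}` (zpow power). -/
noncomputable def complLegendre (l ν : ℕ) (x : ℝ) : ℝ :=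
  (1 - x ^ 2) ^ ((ν : ℤ) - (l : ℤ)) *
    iteratedDeriv ν (fun t : ℝ => (1 - t ^ 2) ^ l) x

/-- Legendre polynomial via Rodrigues' formula. -/
noncomputable def legendreP (l : ℕ) (x : ℝ) : ℝ :=
  (1 / (2 ^ l * (Nat.factorial l : ℝ))) *
    iteratedDeriv l (fun t : ℝ => (t ^ 2 - 1) ^ l) x

/-- Polynomial part of the associated Legendre function:
`𝒫_l^m(x) = (-1)^m (d^m/dx^m) P_l(x)`. -/
noncomputable def assocLegendreP (l m : ℕ) (x : ℝ) : ℝ :=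
  (-1) ^ m * iteratedDeriv m (legendreP l) x

/-- Normalization `N_l^m` (here `(l+m-1)` is natural subtraction, so that for
`l = m = 0` the denominator is `0‼ = 1`, matching the convention `(-1)‼ = 1`). -/
noncomputable def legendreNorm (l m : ℕ) : ℝ :=
  (-1) ^ m * (Nat.choose l ((l - m) / 2) : ℝ) *
    ((Nat.doubleFactorial (l - m) : ℝ) * (Nat.factorial (l - m) : ℝ))
      / (Nat.doubleFactorial (l + m - 1) : ℝ)

open Polynomial

/-- The polynomial `(1 - X²)^l`. -/
noncomputable def PP (l : ℕ) : ℝ[X] := ((1 : ℝ[X]) - X ^ 2) ^ l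

lemma iteratedDeriv_eval_poly (p : ℝ[X]) (ν : ℕ) :
    iteratedDeriv ν (fun t : ℝ => p.eval t) = fun x => ((Polynomial.derivative)^[ν] p).eval x := by
  induction ν with
  | zero => simp
  | succ n ih =>
    rw [iteratedDeriv_succ, ih, Function.iterate_succ_apply']
    funext x
    exact Polynomial.deriv _

lemma baseRel (l : ℕ) :
    ((1:ℝ[X]) - X^2) * derivative (PP l) = (-(2:ℝ[X]) * C (l:ℝ)) * (X * PP l) := by
  cases l with
  | zero => simp [PP]
  | succ n =>
    rw [PP, derivative_pow]
    push_cast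
    simp only [map_add, map_one, map_ofNat, derivative_sub, derivative_one, derivative_X_pow,
      Nat.cast_ofNat, Nat.add_sub_cancel, pow_one, zero_sub, map_natCast]
    ring

lemma odeRel (l ν : ℕ) :
    ((1:ℝ[X]) - X^2) * (Polynomial.derivative)^[ν+2] (PP l)
      = (2 * C (ν:ℝ) + 2 - 2 * C (l:ℝ)) * (X * (Polynomial.derivative)^[ν+1] (PP l))
        + ((C (ν:ℝ) + 1) * (C (ν:ℝ) - 2 * C (l:ℝ))) * (Polynomial.derivative)^[ν] (PP l) := by
  induction ν with
  | zero =>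
    have h := congrArg derivative (baseRel l)
    simp only [derivative_mul, derivative_sub, derivative_one, derivative_X_pow, derivative_X,
      derivative_C, derivative_neg, derivative_ofNat, Nat.cast_ofNat, map_ofNat, pow_one, zero_sub,
      mul_zero, zero_mul, add_zero, zero_add, mul_one, show (2:ℕ)-1 = 1 from rfl] at h
    simp only [Function.iterate_succ_apply', Function.iterate_zero_apply, Nat.cast_zero, map_zero]
    linear_combination h
  | succ n ih =>
    have h := congrArg derivative ih
    simp only [derivative_mul, derivative_sub, derivative_add, derivative_one, derivative_X_pow,
      derivative_X, derivative_C, derivative_neg, derivative_ofNat, Nat.cast_ofNat, map_ofNat,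
      pow_one, zero_sub, mul_zero, zero_mul, add_zero, zero_add, mul_one,
      show (2:ℕ)-1 = 1 from rfl, Nat.succ_eq_add_one,
      ← Function.iterate_succ_apply' Polynomial.derivative] at h
    push_cast
    simp only [map_add, map_one]
    rw [show n + 1 + 2 = n + 2 + 1 from rfl, show n + 1 + 1 = n + 2 from rfl]
    linear_combination h

lemma dvdRel (l : ℕ) : ∀ ν ≤ l, ∃ q : ℝ[X],
    (Polynomial.derivative)^[ν] (PP l) = ((1:ℝ[X]) - X) ^ (l - ν) * q := by
  intro ν
  induction ν with
  | zero =>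
    intro _
    exact ⟨((1:ℝ[X]) + X) ^ l,
      by rw [PP, Nat.sub_zero, Function.iterate_zero_apply, ← mul_pow]; congr 1; ring⟩
  | succ n ih =>
    intro hn
    obtain ⟨q, hq⟩ := ih (by omega)
    refine ⟨-(C ((l - n : ℕ):ℝ)) * q + ((1:ℝ[X]) - X) * derivative q, ?_⟩
    rw [Function.iterate_succ_apply', hq, derivative_mul, derivative_pow]
    have h1 : l - n = (l - (n+1)) + 1 := by omega
    rw [h1]
    simp only [derivative_sub, derivative_one, derivative_X, zero_sub, Nat.add_sub_cancel]
    push_cast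
    ring

lemma eval_one_iter (l ν : ℕ) (hν : ν < l) :
    ((Polynomial.derivative)^[ν] (PP l)).eval 1 = 0 := by
  obtain ⟨q, hq⟩ := dvdRel l ν (le_of_lt hν)
  rw [hq, eval_mul, eval_pow, eval_sub, eval_one, eval_X, sub_self,
    zero_pow (by omega), zero_mul]

lemma const_of_deriv_eq (p q : ℝ[X]) (h1 : derivative p = derivative q)
    (h2 : p.eval 1 = q.eval 1) : p = q := by
  have h3 : derivative (p - q) = 0 := by rw [derivative_sub, h1, sub_self]
  have h4 := Polynomial.eq_C_of_natDegree_eq_zero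
    (Polynomial.natDegree_eq_zero_of_derivative_eq_zero h3)
  have h5 : (p - q).eval 1 = 0 := by rw [eval_sub, h2, sub_self]
  rw [h4, eval_C] at h5
  have h6 : p - q = 0 := by rw [h4, h5, map_zero]
  exact sub_eq_zero.mp h6

lemma keyPoly (l : ℕ) : ∀ m, m ≤ l →
    C (((l+m).factorial : ℝ)) * (Polynomial.derivative)^[l-m] (PP l)
      = C ((-1:ℝ)^m * ((l-m).factorial : ℝ))
          * (((1:ℝ[X]) - X^2)^m * (Polynomial.derivative)^[l+m] (PP l)) := by
  intro m
  induction m with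
  | zero => intro _; simp
  | succ n ih =>
    intro hn1
    have ih' := ih (by omega)
    have ode := odeRel l (l+n)
    rw [Nat.cast_add, map_add] at ode
    have caR : (((l+(n+1)).factorial : ℕ) : ℝ) = ((l:ℝ) + n + 1) * ((l+n).factorial : ℝ) := by
      rw [show l + (n+1) = (l+n)+1 from rfl, Nat.factorial_succ]; push_cast; ring
    have cbR : (((l-n).factorial : ℕ) : ℝ) = ((l:ℝ) - n) * ((l-(n+1)).factorial : ℝ) := by
      rw [show l - n = (l - (n+1)) + 1 from by omega, Nat.factorial_succ]
      push_cast [Nat.cast_sub hn1]; ring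
    have ca := congrArg (C : ℝ → ℝ[X]) caR
    have cb := congrArg (C : ℝ → ℝ[X]) cbR
    apply const_of_deriv_eq
    · rw [derivative_C_mul, derivative_C_mul, derivative_mul, derivative_pow,
        ← Function.iterate_succ_apply' Polynomial.derivative,
        ← Function.iterate_succ_apply' Polynomial.derivative]
      simp only [Nat.succ_eq_add_one]
      rw [show l - (n+1) + 1 = l - n from by omega,
        show l + (n+1) + 1 = l + n + 2 from rfl,
        show l + (n+1) = l + n + 1 from rfl,
        Nat.add_sub_cancel]
      simp only [derivative_sub, derivative_one, derivative_X_pow, Nat.cast_ofNat,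
        show (2:ℕ)-1 = 1 from rfl, pow_one, zero_sub, map_ofNat]
      rw [show l + (n + 1) = l + n + 1 from rfl] at ca
      push_cast
      simp only [map_mul, map_pow, map_neg, map_one, map_add, map_sub] at ca cb ih' ⊢
      linear_combination ((Polynomial.derivative)^[l-n] (PP l)) * ca
        + (C (l:ℝ) + C (n:ℝ) + 1) * ih'
        + (C (l:ℝ) + C (n:ℝ) + 1) * (-1:ℝ[X])^n * ((1:ℝ[X])-X^2)^n
            * ((Polynomial.derivative)^[l+n] (PP l)) * cb
        + (-1:ℝ[X])^n * C (((l-(n+1)).factorial : ℝ)) * ((1:ℝ[X])-X^2)^n * ode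
    · have h0 : l - (n+1) < l := by omega
      simp [eval_one_iter l _ h0, eval_pow, zero_pow]

lemma normEq (l m : ℕ) (hm : m ≤ l) (he : Even (l - m)) :
    legendreNorm l m
      = (-1:ℝ)^l * 2^l * (l.factorial : ℝ) * ((l-m).factorial : ℝ) / ((l+m).factorial : ℝ) := by
  obtain ⟨k, hk⟩ := he
  have hk2 : l - m = 2 * k := by omega
  have hkl : k ≤ l := by omega
  have hsign : (-1:ℝ)^l = (-1)^m := by
    rw [show l = m + 2*k from by omega, pow_add, pow_mul]; norm_num
  rcases Nat.eq_zero_or_pos (l + m) with h0 | h1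
  · have hl : l = 0 := by omega
    have hmm : m = 0 := by omega
    subst hl; subst hmm
    norm_num [legendreNorm, Nat.doubleFactorial]
  · have hm2 : l + m = 2 * (l - k) := by omega
    have hfacN : (l+m).factorial = (l+m).doubleFactorial * (l+m-1).doubleFactorial := by
      have h := Nat.factorial_eq_mul_doubleFactorial (l+m-1)
      rwa [show l+m-1+1 = l+m from by omega] at h
    have hdf1 : (l+m).doubleFactorial = 2^(l-k) * (l-k).factorial := by
      rw [hm2, Nat.doubleFactorial_two_mul]
    have hdf2 : (l-m).doubleFactorial = 2^k * k.factorial := by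
      rw [hk2, Nat.doubleFactorial_two_mul]
    have hch : (l.choose k : ℝ) * (k.factorial : ℝ) * ((l-k).factorial : ℝ) = (l.factorial : ℝ) := by
      exact_mod_cast congrArg (Nat.cast : ℕ → ℝ) (Nat.choose_mul_factorial_mul_factorial hkl)
    have hD : ((l+m-1).doubleFactorial : ℝ) ≠ 0 := by
      exact_mod_cast (Nat.doubleFactorial_pos _).ne'
    have hF : ((l+m).factorial : ℝ) ≠ 0 := by exact_mod_cast (Nat.factorial_pos _).ne'
    have hFe : ((l+m).factorial : ℝ)
        = (2^(l-k) * ((l-k).factorial : ℝ)) * ((l+m-1).doubleFactorial : ℝ) := by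
      rw [hfacN]; push_cast [hdf1]; ring
    rw [legendreNorm, show (l - m)/2 = k from by omega, hdf2, hsign]
    field_simp
    rw [hFe]
    have h2l : (2:ℝ)^k * 2^(l-k) = 2^l := by
      rw [← pow_add, show k + (l - k) = l from by omega]
    push_cast
    linear_combination (((l+m-1).doubleFactorial : ℝ)
        * (2:ℝ)^k * (2:ℝ)^(l-k)) * hch
      + (((l+m-1).doubleFactorial : ℝ)
        * (l.factorial : ℝ)) * h2l

theorem complLegendre_normalization_even (l m : ℕ) (hm : m ≤ l) (he : Even (l - m))
    (x : ℝ) (hx : x ^ 2 ≠ 1) :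
    complLegendre l (l - m) x = legendreNorm l m * assocLegendreP l m x := by
  have hx1 : (1:ℝ) - x^2 ≠ 0 := by
    intro h; apply hx; linarith
  have hxm : ((1:ℝ) - x^2)^m ≠ 0 := pow_ne_zero _ hx1
  -- rewrite LHS
  have hfun : (fun t : ℝ => (1 - t^2)^l) = fun t => (PP l).eval t := by
    funext t; simp [PP]
  have hQ : (fun t : ℝ => (t^2 - 1)^l) = fun t => (C ((-1:ℝ)^l) * PP l).eval t := by
    funext t
    rw [eval_mul, eval_C, PP]
    simp only [eval_pow, eval_sub, eval_one, eval_X]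
    rw [show t^2 - 1 = -(1 - t^2) from by ring, neg_pow]
  have hleg : legendreP l = fun y : ℝ =>
      ((C ((1 / (2 ^ l * (l.factorial : ℝ))) * (-1:ℝ)^l)) * (Polynomial.derivative)^[l] (PP l)).eval y := by
    funext y
    rw [legendreP, hQ, iteratedDeriv_eval_poly, Polynomial.iterate_derivative_C_mul]
    simp only [eval_mul, eval_C, map_mul]
    ring
  have hmid : iteratedDeriv m (legendreP l) x
      = (1 / (2 ^ l * (l.factorial : ℝ))) * (-1:ℝ)^l
          * ((Polynomial.derivative)^[l+m] (PP l)).eval x := by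
    rw [hleg, iteratedDeriv_eval_poly, Polynomial.iterate_derivative_C_mul]
    rw [show (Polynomial.derivative)^[m] ((Polynomial.derivative)^[l] (PP l))
        = (Polynomial.derivative)^[l+m] (PP l) from by
      rw [Nat.add_comm l m, Function.iterate_add_apply]]
    simp only [eval_mul, eval_C, map_mul]
  have key := congrArg (eval x) (keyPoly l m hm)
  simp only [eval_mul, eval_C, eval_pow, eval_sub, eval_one, eval_X] at key
  -- numbers
  have hfac : ((l+m).factorial : ℝ) ≠ 0 := by exact_mod_cast (Nat.factorial_pos _).ne'
  have hlf : ((l.factorial : ℝ)) ≠ 0 := by exact_mod_cast (Nat.factorial_pos _).ne'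
  have h2 : ((2:ℝ)^l) ≠ 0 := by positivity
  have hsq : (-1:ℝ)^l * (-1:ℝ)^l = 1 := by
    rw [← mul_pow]; norm_num
  rw [complLegendre, hfun, iteratedDeriv_eval_poly]
  rw [show ((l - m : ℕ) : ℤ) - (l : ℤ) = -(m : ℤ) from by omega, zpow_neg, zpow_natCast]
  rw [assocLegendreP, hmid, normEq l m hm he]
  field_simp
  linear_combination key
    - (((l-m).factorial : ℝ) * (-1:ℝ)^m
        * ((Polynomial.derivative)^[l+m] (PP l)).eval x * (1 - x^2)^m) * hsq
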